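/- A positive integer m has no predecessor under f if and only if m = ⌊n·(2+√2)⌋ for some positive integer n. -/

import Mathlib

/-- The map `f(n) = ⌊n/√2⌋` if `n` is even and `f(n) = ⌊n·√2⌋` if `n` is odd. -/
noncomputable def f (n : ℕ) : ℕ :=
  if Even n then ⌊(n : ℝ) / Real.sqrt 2⌋₊ else ⌊(n : ℝ) * Real.sqrt 2⌋₊

lemma sqrt2_sq : Real.sqrt 2 * Real.sqrt 2 = 2 := Real.mul_self_sqrt (by norm_num)

lemma sqrt2_pos : (0:ℝ) < Real.sqrt 2 := Real.sqrt_pos.2 (by norm_num)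

lemma one_lt_sqrt2 : (1:ℝ) < Real.sqrt 2 := by nlinarith [sqrt2_sq, sqrt2_pos]

lemma conj2 : Real.HolderConjugate (Real.sqrt 2) (2 + Real.sqrt 2) := by
  rw [Real.holderConjugate_iff]
  constructor
  · exact one_lt_sqrt2
  · have h := sqrt2_sq
    have h1 : Real.sqrt 2 ≠ 0 := ne_of_gt sqrt2_pos
    have h2 : (2 : ℝ) + Real.sqrt 2 ≠ 0 := by positivity
    field_simp
    nlinarith [sqrt2_sq]

lemma div_sqrt2 (k : ℕ) : ((k + k : ℕ) : ℝ) / Real.sqrt 2 = (k : ℝ) * Real.sqrt 2 := by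
  rw [div_eq_iff (ne_of_gt sqrt2_pos)]
  push_cast
  nlinarith [sqrt2_sq]

lemma pred_iff (m : ℕ) :
    (∃ n : ℕ, 0 < n ∧ f n = m) ↔ ∃ k : ℤ, k > 0 ∧ beattySeq (Real.sqrt 2) k = m := by
  constructor
  · rintro ⟨n, hn, hfn⟩
    unfold f at hfn
    split_ifs at hfn with he
    · obtain ⟨k, rfl⟩ := he
      have hk : 0 < k := by omega
      refine ⟨(k : ℤ), by exact_mod_cast hk, ?_⟩
      rw [div_sqrt2 k] at hfn
      rw [← hfn, beattySeq]
      rw [Int.natCast_floor_eq_floor (by positivity)]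
      norm_num
    · refine ⟨(n : ℤ), by exact_mod_cast hn, ?_⟩
      rw [← hfn, beattySeq]
      rw [Int.natCast_floor_eq_floor (by positivity)]
      norm_num
  · rintro ⟨k, hk, hb⟩
    lift k to ℕ using hk.le
    have hk' : 0 < k := by exact_mod_cast hk
    refine ⟨k + k, by omega, ?_⟩
    unfold f
    rw [if_pos ⟨k, rfl⟩, div_sqrt2 k]
    have : (m : ℤ) = ⌊(k : ℝ) * Real.sqrt 2⌋ := by
      rw [← hb, beattySeq]; norm_num
    rw [← Int.natCast_floor_eq_floor (by positivity)] at this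
    exact_mod_cast this.symm

lemma target_iff (m : ℕ) :
    (∃ n : ℕ, 0 < n ∧ m = ⌊(n : ℝ) * (2 + Real.sqrt 2)⌋₊) ↔
      ∃ k : ℤ, k > 0 ∧ beattySeq (2 + Real.sqrt 2) k = m := by
  constructor
  · rintro ⟨n, hn, rfl⟩
    refine ⟨(n : ℤ), by exact_mod_cast hn, ?_⟩
    rw [beattySeq, Int.natCast_floor_eq_floor (by positivity)]
    norm_num
  · rintro ⟨k, hk, hb⟩
    lift k to ℕ using hk.le
    have hk' : 0 < k := by exact_mod_cast hk
    refine ⟨k, hk', ?_⟩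
    have : (m : ℤ) = ⌊(k : ℝ) * (2 + Real.sqrt 2)⌋ := by
      rw [← hb, beattySeq]; norm_num
    rw [← Int.natCast_floor_eq_floor (by positivity)] at this
    exact_mod_cast this

/-- A positive integer `m` has no predecessor under `f` iff `m = ⌊n·(2+√2)⌋` for some
positive integer `n`. -/
theorem noPred_iff (m : ℕ) (hm : 0 < m) :
    (¬ ∃ n : ℕ, 0 < n ∧ f n = m) ↔
      ∃ n : ℕ, 0 < n ∧ m = ⌊(n : ℝ) * (2 + Real.sqrt 2)⌋₊ := by
  have hirr : Irrational (Real.sqrt 2) := irrational_sqrt_two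
  have hray := Irrational.beattySeq_symmDiff_beattySeq_pos conj2 hirr
  have hmem : (m : ℤ) ∈ symmDiff {x : ℤ | ∃ k > 0, beattySeq (Real.sqrt 2) k = x}
        {x : ℤ | ∃ k > 0, beattySeq (2 + Real.sqrt 2) k = x} := by
    rw [hray]
    simp only [Set.mem_setOf_eq]
    exact_mod_cast hm
  rw [Set.mem_symmDiff] at hmem
  rw [pred_iff, target_iff]
  simp only [Set.mem_setOf_eq] at hmem
  rcases hmem with ⟨hA, hB⟩ | ⟨hB, hA⟩
  · exact ⟨fun h => absurd hA h, fun hb => absurd hb hB⟩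
  · exact ⟨fun _ => hB, fun _ => hA⟩
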